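/- Let a₀ > 0, c₀ ∈ ℝ, m(p) = 1/(e^{a₀|p|²+c₀}+1), and set N₀ = ∫ m dp, E₀ = ∫ |p|² m dp, k = ∫ (m − m²) dp (all integrals over ℝ³). If c₀ > −ln 3, then E₀·k − 9N₀²/(10a₀) > 0. -/

import Mathlib

open Real MeasureTheory Set Filter

noncomputable def fr (a c r : ℝ) : ℝ := 1 / (Real.exp (a*r^2+c) + 1)
noncomputable def gr (a c s : ℝ) : ℝ :=
  2*a*s*Real.exp (a*s^2+c) / (Real.exp (a*s^2+c)+1)^2

variable {a c : ℝ}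

lemma epos (s : ℝ) : (0:ℝ) < Real.exp (a*s^2+c) + 1 := by positivity

lemma fr_cont : Continuous (fr a c) := by
  unfold fr; fun_prop (disch := intro x; positivity)

lemma gr_cont : Continuous (gr a c) := by
  unfold gr; fun_prop (disch := intro x; positivity)

lemma fr_nonneg (s : ℝ) : 0 ≤ fr a c s := by
  unfold fr; positivity

lemma fr_le_one (s : ℝ) : fr a c s ≤ 1 := by
  unfold fr
  rw [div_le_one (epos s)]
  nlinarith [Real.exp_pos (a*s^2+c)]

lemma fr_le (s : ℝ) : fr a c s ≤ Real.exp (-(a*s^2+c)) := by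
  unfold fr
  rw [Real.exp_neg, one_div, inv_le_inv₀ (epos s) (Real.exp_pos _)]
  linarith [Real.exp_pos (a*s^2+c)]

lemma gr_nonneg (ha : 0 ≤ a) {s : ℝ} (hs : 0 ≤ s) : 0 ≤ gr a c s := by
  unfold gr; positivity

lemma gr_pos (ha : 0 < a) {s : ℝ} (hs : 0 < s) : 0 < gr a c s := by
  unfold gr; positivity

lemma gr_le (ha : 0 ≤ a) {s : ℝ} (hs : 0 ≤ s) :
    gr a c s ≤ 2*a*s*Real.exp (-(a*s^2+c)) := by
  unfold gr
  rw [div_le_iff₀ (by positivity), Real.exp_neg]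
  have h1 := Real.exp_pos (a*s^2+c)
  have h2 : Real.exp (a*s^2+c) ^ 2 ≤ (Real.exp (a*s^2+c)+1)^2 := by nlinarith
  calc 2*a*s*Real.exp (a*s^2+c) = (2*a*s) * ((Real.exp (a*s^2+c))⁻¹ * Real.exp (a*s^2+c)^2) := by
        field_simp
    _ ≤ (2*a*s) * ((Real.exp (a*s^2+c))⁻¹ * (Real.exp (a*s^2+c)+1)^2) := by
        apply mul_le_mul_of_nonneg_left _ (by positivity)
        exact mul_le_mul_of_nonneg_left h2 (by positivity)
    _ = 2*a*s*(Real.exp (a*s^2+c))⁻¹ * (Real.exp (a*s^2+c)+1)^2 := by ring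

lemma fr_deriv (s : ℝ) : HasDerivAt (fr a c) (-(gr a c s)) s := by
  have h1 : HasDerivAt (fun s : ℝ => a*s^2+c) (2*a*s) s := by
    simpa [mul_comm, mul_assoc, mul_left_comm] using
      (((hasDerivAt_pow 2 s).const_mul a).add_const c)
  have h2 := (h1.exp.add_const 1).inv (ne_of_gt (epos s))
  have : fr a c = fun s => (Real.exp (a*s^2+c) + 1)⁻¹ := by
    funext x; simp [fr, one_div]
  rw [this]
  refine h2.congr_deriv ?_
  unfold gr
  field_simp

variable {a c : ℝ}

lemma int_dom (ha : 0 < a) (n : ℕ) :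
    IntegrableOn (fun s : ℝ => s^n * Real.exp (-(a*s^2+c))) (Ioi 0) := by
  have h := (integrable_rpow_mul_exp_neg_mul_sq ha
    (s := (n:ℝ)) (neg_one_lt_zero.trans_le (Nat.cast_nonneg n))).integrableOn (s := Ioi (0:ℝ))
  have h2 := h.const_mul (Real.exp (-c))
  apply h2.congr
  filter_upwards with x
  rw [Real.rpow_natCast]
  rw [show -(a*x^2+c) = -a*x^2 + -c by ring, Real.exp_add]
  ring

lemma tend_dom (ha : 0 < a) (n : ℕ) :
    Tendsto (fun s : ℝ => s^n * Real.exp (-(a*s^2+c))) atTop (nhds 0) := by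
  have key : Tendsto (fun s : ℝ => (1/a^n * Real.exp (-c)) *
      ((a*s^2)^n * Real.exp (-(a*s^2)))) atTop (nhds 0) := by
    have h1 : Tendsto (fun x : ℝ => x^n * Real.exp (-x)) atTop (nhds 0) :=
      tendsto_pow_mul_exp_neg_atTop_nhds_zero n
    have h2 : Tendsto (fun s : ℝ => a*s^2) atTop atTop := by
      apply Tendsto.const_mul_atTop ha
      exact tendsto_pow_atTop (by norm_num)
    simpa using (h1.comp h2).const_mul (1/a^n * Real.exp (-c))
  apply squeeze_zero' (g := fun s => (1/a^n * Real.exp (-c)) *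
      ((a*s^2)^n * Real.exp (-(a*s^2))))
  · filter_upwards [eventually_ge_atTop (0:ℝ)] with s hs
    positivity
  · filter_upwards [eventually_ge_atTop (1:ℝ)] with s hs
    have hs0 : (0:ℝ) ≤ s := by linarith
    have hpow : s^n ≤ (s^2)^n := by
      apply pow_le_pow_left₀ hs0
      nlinarith
    have : Real.exp (-(a*s^2+c)) = Real.exp (-c) * Real.exp (-(a*s^2)) := by
      rw [← Real.exp_add]; ring_nf
    rw [this]
    have hexp : (0:ℝ) < Real.exp (-(a*s^2)) := Real.exp_pos _
    calc s^n * (Real.exp (-c) * Real.exp (-(a*s^2)))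
        ≤ (s^2)^n * (Real.exp (-c) * Real.exp (-(a*s^2))) := by
          apply mul_le_mul_of_nonneg_right hpow (by positivity)
      _ = (1/a^n * Real.exp (-c)) * ((a*s^2)^n * Real.exp (-(a*s^2))) := by
          rw [mul_pow]; field_simp
  · exact key

lemma int_f (ha : 0 < a) (n : ℕ) :
    IntegrableOn (fun s : ℝ => s^n * fr a c s) (Ioi 0) := by
  apply (int_dom ha n).mono'
    (Continuous.aestronglyMeasurable ((continuous_pow n).mul fr_cont))
  filter_upwards [ae_restrict_mem measurableSet_Ioi] with s hs
  have hs0 : (0:ℝ) ≤ s := le_of_lt hs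
  have hf0 := fr_nonneg (a:=a) (c:=c) s
  simp only [Real.norm_eq_abs, Pi.mul_apply]
  rw [abs_of_nonneg (mul_nonneg (by positivity) hf0)]
  exact mul_le_mul_of_nonneg_left (fr_le s) (by positivity)

lemma int_g (ha : 0 < a) (n : ℕ) :
    IntegrableOn (fun s : ℝ => s^n * gr a c s) (Ioi 0) := by
  have hdom : IntegrableOn (fun s : ℝ => 2*a*(s^(n+1) * Real.exp (-(a*s^2+c)))) (Ioi 0) :=
    (int_dom ha (n+1)).const_mul _
  apply hdom.mono' (Continuous.aestronglyMeasurable ((continuous_pow n).mul gr_cont))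
  filter_upwards [ae_restrict_mem measurableSet_Ioi] with s hs
  have hs0 : (0:ℝ) ≤ s := le_of_lt hs
  have hg := gr_nonneg (c := c) ha.le hs0
  simp only [Real.norm_eq_abs, Pi.mul_apply]
  rw [abs_of_nonneg (mul_nonneg (by positivity) hg)]
  calc s^n * gr a c s ≤ s^n * (2*a*s*Real.exp (-(a*s^2+c))) :=
        mul_le_mul_of_nonneg_left (gr_le ha.le hs0) (by positivity)
    _ = 2*a*(s^(n+1) * Real.exp (-(a*s^2+c))) := by ring

lemma tend_f (ha : 0 < a) (n : ℕ) :
    Tendsto (fun s : ℝ => s^n * fr a c s) atTop (nhds 0) := by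
  apply squeeze_zero' (g := fun s : ℝ => s^n * Real.exp (-(a*s^2+c)))
  · filter_upwards [eventually_ge_atTop (0:ℝ)] with s hs
    have := fr_nonneg (a:=a) (c:=c) s
    positivity
  · filter_upwards [eventually_ge_atTop (0:ℝ)] with s hs
    exact mul_le_mul_of_nonneg_left (fr_le s) (by positivity)
  · exact tend_dom ha n

/-- FTC step: `(k+1) ∫ s^k f = ∫ s^(k+1) g` on `Ioi 0`. -/
lemma ftc_step (ha : 0 < a) (k : ℕ) :
    ((k:ℝ)+1) * ∫ s in Ioi (0:ℝ), s^k * fr a c s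
      = ∫ s in Ioi (0:ℝ), s^(k+1) * gr a c s := by
  have hderiv : ∀ s ∈ Ioi (0:ℝ), HasDerivAt (fun s => s^(k+1) * fr a c s)
      (((k:ℝ)+1) * (s^k * fr a c s) - s^(k+1) * gr a c s) s := by
    intro s _
    have h := (hasDerivAt_pow (k+1) s).mul (fr_deriv (a:=a) (c:=c) s)
    refine h.congr_deriv ?_
    push_cast
    ring
  have hint : IntegrableOn (fun s : ℝ =>
      ((k:ℝ)+1) * (s^k * fr a c s) - s^(k+1) * gr a c s) (Ioi 0) :=
    ((int_f ha k).const_mul _).sub (int_g ha (k+1))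
  have htend : Tendsto (fun s : ℝ => s^(k+1) * fr a c s) atTop (nhds 0) := tend_f ha (k+1)
  have hcont : ContinuousWithinAt (fun s : ℝ => s^(k+1) * fr a c s) (Ici 0) 0 :=
    (Continuous.continuousWithinAt (by exact (continuous_pow _).mul fr_cont))
  have := MeasureTheory.integral_Ioi_of_hasDerivAt_of_tendsto hcont hderiv hint htend
  simp only [zero_pow (Nat.succ_ne_zero k), zero_mul, sub_zero, sub_self] at this
  rw [MeasureTheory.integral_sub ((int_f ha k).const_mul _) (int_g ha (k+1)),
      MeasureTheory.integral_const_mul] at this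
  linarith

noncomputable def Mk (a c : ℝ) (k : ℕ) : ℝ := ∫ s in Ioi (0:ℝ), s^k * gr a c s

lemma W_expand (ha : 0 < a) (s : ℝ) :
    ∫ t in Ioi (0:ℝ), (t * gr a c t) * (s^2 - t^2)^2
      = s^4 * Mk a c 1 - 2*s^2 * Mk a c 3 + Mk a c 5 := by
  have h1 := int_g (c:=c) ha 1
  have h3 := int_g (c:=c) ha 3
  have h5 := int_g (c:=c) ha 5
  have : ∀ t : ℝ, (t * gr a c t) * (s^2 - t^2)^2
      = s^4 * (t^1 * gr a c t) - 2*s^2 * (t^3 * gr a c t) + t^5 * gr a c t := by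
    intro t; ring
  simp_rw [this]
  have hsub : IntegrableOn (fun t : ℝ => s^4 * (t^1 * gr a c t) - 2*s^2 * (t^3 * gr a c t))
      (Ioi 0) := (h1.const_mul _).sub (h3.const_mul _)
  rw [MeasureTheory.integral_add hsub h5,
      MeasureTheory.integral_sub (h1.const_mul _) (h3.const_mul _),
      MeasureTheory.integral_const_mul, MeasureTheory.integral_const_mul]
  rfl

lemma W_pos (ha : 0 < a) {s : ℝ} (hs : 0 < s) :
    0 < ∫ t in Ioi (0:ℝ), (t * gr a c t) * (s^2 - t^2)^2 := by
  have hint : IntegrableOn (fun t : ℝ => (t * gr a c t) * (s^2 - t^2)^2) (Ioi 0) := by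
    have : ∀ t : ℝ, (t * gr a c t) * (s^2 - t^2)^2
        = s^4 * (t^1 * gr a c t) - 2*s^2 * (t^3 * gr a c t) + t^5 * gr a c t := by
      intro t; ring
    simp_rw [this]
    exact (((int_g ha 1).const_mul _).sub ((int_g ha 3).const_mul _)).add (int_g ha 5)
  rw [setIntegral_pos_iff_support_of_nonneg_ae _ hint]
  · apply lt_of_lt_of_le _ (measure_mono (?_ :
      Ioi 0 \ {s} ⊆ Function.support (fun t : ℝ => (t * gr a c t) * (s^2 - t^2)^2) ∩ Ioi 0))
    · rw [measure_diff_null (measure_singleton s), Real.volume_Ioi]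
      exact ENNReal.zero_lt_top
    · rintro t ⟨ht, hts⟩
      refine ⟨?_, ht⟩
      have ht0 : (0:ℝ) < t := ht
      have hg := gr_pos (c:=c) ha ht0
      have hne : s^2 - t^2 ≠ 0 := by
        intro h
        apply hts
        have : t = s := by nlinarith
        simp [this]
      simp only [Function.mem_support]
      positivity
  · filter_upwards [ae_restrict_mem measurableSet_Ioi] with t ht
    have ht0 : (0:ℝ) < t := ht
    have hg := gr_pos (c:=c) ha ht0
    positivity

lemma key_pos (ha : 0 < a) : 0 < Mk a c 5 * Mk a c 1 - (Mk a c 3)^2 := by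
  have h1 := int_g (c:=c) ha 1
  have h3 := int_g (c:=c) ha 3
  have h5 := int_g (c:=c) ha 5
  set P : ℝ := ∫ s in Ioi (0:ℝ),
      (s * gr a c s) * (s^4 * Mk a c 1 - 2*s^2 * Mk a c 3 + Mk a c 5) with hP
  have hPint : IntegrableOn (fun s : ℝ =>
      (s * gr a c s) * (s^4 * Mk a c 1 - 2*s^2 * Mk a c 3 + Mk a c 5)) (Ioi 0) := by
    have : ∀ s : ℝ, (s * gr a c s) * (s^4 * Mk a c 1 - 2*s^2 * Mk a c 3 + Mk a c 5)
        = Mk a c 1 * (s^5 * gr a c s) - (2 * Mk a c 3) * (s^3 * gr a c s)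
          + Mk a c 5 * (s^1 * gr a c s) := by intro s; ring
    simp_rw [this]
    exact (((h5.const_mul _).sub (h3.const_mul _)).add (h1.const_mul _))
  have hPval : P = Mk a c 5 * Mk a c 1 - 2 * (Mk a c 3)^2 + Mk a c 1 * Mk a c 5 := by
    rw [hP]
    have : ∀ s : ℝ, (s * gr a c s) * (s^4 * Mk a c 1 - 2*s^2 * Mk a c 3 + Mk a c 5)
        = Mk a c 1 * (s^5 * gr a c s) - (2 * Mk a c 3) * (s^3 * gr a c s)
          + Mk a c 5 * (s^1 * gr a c s) := by intro s; ring
    simp_rw [this]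
    have hsub : IntegrableOn (fun s : ℝ =>
        Mk a c 1 * (s^5 * gr a c s) - (2 * Mk a c 3) * (s^3 * gr a c s)) (Ioi 0) :=
      (h5.const_mul _).sub (h3.const_mul _)
    rw [MeasureTheory.integral_add hsub (h1.const_mul _),
        MeasureTheory.integral_sub (h5.const_mul _) (h3.const_mul _),
        MeasureTheory.integral_const_mul, MeasureTheory.integral_const_mul,
        MeasureTheory.integral_const_mul]
    show Mk a c 1 * Mk a c 5 - 2 * Mk a c 3 * Mk a c 3 + Mk a c 5 * Mk a c 1 = _
    ring
  have hPpos : 0 < P := by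
    rw [hP, setIntegral_pos_iff_support_of_nonneg_ae _ hPint]
    · apply lt_of_lt_of_le _ (measure_mono (?_ : Ioi 0 ⊆ Function.support
        (fun s : ℝ => (s * gr a c s) * (s^4 * Mk a c 1 - 2*s^2 * Mk a c 3 + Mk a c 5)) ∩ Ioi 0))
      · rw [Real.volume_Ioi]; exact ENNReal.zero_lt_top
      · intro s hs
        refine ⟨?_, hs⟩
        have hs0 : (0:ℝ) < s := hs
        have hW := W_pos (c:=c) ha hs0
        rw [W_expand ha s] at hW
        have hg := gr_pos (c:=c) ha hs0
        simp only [Function.mem_support]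
        positivity
    · filter_upwards [ae_restrict_mem measurableSet_Ioi] with s hs
      have hs0 : (0:ℝ) < s := hs
      have hW := W_pos (c:=c) ha hs0
      rw [W_expand ha s] at hW
      have hg := gr_pos (c:=c) ha hs0
      positivity
  nlinarith [hPpos, hPval]

lemma pointwise_k (ha : a ≠ 0) (y : ℝ) :
    y^2 * (fr a c y - fr a c y ^ 2) = (1/(2*a)) * (y^1 * gr a c y) := by
  have := epos (a:=a) (c:=c) y
  unfold fr gr
  field_simp
  ring

lemma sphere_int (F : ℝ → ℝ) :
    ∫ p : EuclideanSpace ℝ (Fin 3), F ‖p‖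
      = 3 * (volume (Metric.ball (0:EuclideanSpace ℝ (Fin 3)) 1)).toReal
        * ∫ y in Ioi (0:ℝ), y^2 * F y := by
  rw [MeasureTheory.integral_fun_norm_addHaar volume F]
  simp only [finrank_euclideanSpace_fin, smul_eq_mul, nsmul_eq_mul, Nat.cast_ofNat]
  rw [measureReal_def]
  norm_num [mul_assoc]

theorem stmt_19 (a₀ : ℝ) (ha : 0 < a₀) (c₀ : ℝ) (hc : -Real.log 3 < c₀)
    (m : EuclideanSpace ℝ (Fin 3) → ℝ)
    (hm : ∀ p, m p = 1 / (exp (a₀ * ‖p‖ ^ 2 + c₀) + 1))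
    (N₀ E₀ k : ℝ)
    (hN : N₀ = ∫ p : EuclideanSpace ℝ (Fin 3), m p)
    (hE : E₀ = ∫ p : EuclideanSpace ℝ (Fin 3), ‖p‖ ^ 2 * m p)
    (hk : k = ∫ p : EuclideanSpace ℝ (Fin 3), (m p - m p ^ 2)) :
    0 < E₀ * k - 9 * N₀ ^ 2 / (10 * a₀) := by
  set κ := (volume (Metric.ball (0:EuclideanSpace ℝ (Fin 3)) 1)).toReal with hκdef
  have hκ : 0 < κ := by
    apply ENNReal.toReal_pos
    · exact (Metric.measure_ball_pos volume (0:EuclideanSpace ℝ (Fin 3)) one_pos).ne'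
    · exact measure_ball_lt_top.ne
  -- FTC facts
  have hftc2 := ftc_step (a:=a₀) (c:=c₀) ha 2
  have hftc4 := ftc_step (a:=a₀) (c:=c₀) ha 4
  norm_num at hftc2 hftc4
  have hM1 : Mk a₀ c₀ 1 = ∫ s in Ioi (0:ℝ), s^1 * gr a₀ c₀ s := rfl
  have hM3 : Mk a₀ c₀ 3 = ∫ s in Ioi (0:ℝ), s^3 * gr a₀ c₀ s := rfl
  have hM5 : Mk a₀ c₀ 5 = ∫ s in Ioi (0:ℝ), s^5 * gr a₀ c₀ s := rfl
  -- N₀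
  have hN' : N₀ = κ * Mk a₀ c₀ 3 := by
    rw [hN]
    have : ∀ p : EuclideanSpace ℝ (Fin 3), m p = fr a₀ c₀ ‖p‖ := by
      intro p; rw [hm]; rfl
    simp_rw [this]
    rw [sphere_int (fr a₀ c₀), ← hκdef]
    have h3 : ∫ y in Ioi (0:ℝ), y^2 * fr a₀ c₀ y = Mk a₀ c₀ 3 / 3 := by
      rw [eq_div_iff (by norm_num : (3:ℝ) ≠ 0), hM3]; linarith
    rw [h3]; ring
  -- E₀
  have hE' : E₀ = 3 * κ * (Mk a₀ c₀ 5 / 5) := by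
    rw [hE]
    have : ∀ p : EuclideanSpace ℝ (Fin 3),
        ‖p‖^2 * m p = (fun r : ℝ => r^2 * fr a₀ c₀ r) ‖p‖ := by
      intro p; rw [hm]; rfl
    simp_rw [this]
    rw [sphere_int (fun r : ℝ => r^2 * fr a₀ c₀ r)]
    have : ∫ y in Ioi (0:ℝ), y^2 * (y^2 * fr a₀ c₀ y) = ∫ y in Ioi (0:ℝ), y^4 * fr a₀ c₀ y := by
      congr 1; funext y; ring
    rw [this]
    have h5 : ∫ y in Ioi (0:ℝ), y^4 * fr a₀ c₀ y = Mk a₀ c₀ 5 / 5 := by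
      rw [eq_div_iff (by norm_num : (5:ℝ) ≠ 0), hM5]
      linarith [hftc4]
    rw [h5, ← hκdef]
  -- k
  have hk' : k = 3 * κ * (Mk a₀ c₀ 1 / (2 * a₀)) := by
    rw [hk]
    have : ∀ p : EuclideanSpace ℝ (Fin 3),
        m p - m p ^ 2 = (fun r : ℝ => fr a₀ c₀ r - fr a₀ c₀ r ^ 2) ‖p‖ := by
      intro p; rw [hm]; rfl
    simp_rw [this]
    rw [sphere_int (fun r : ℝ => fr a₀ c₀ r - fr a₀ c₀ r ^ 2)]
    have heq : ∫ y in Ioi (0:ℝ), y^2 * (fr a₀ c₀ y - fr a₀ c₀ y ^ 2)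
        = (1/(2*a₀)) * Mk a₀ c₀ 1 := by
      have := pointwise_k (a:=a₀) (c:=c₀) ha.ne'
      simp_rw [this]
      rw [MeasureTheory.integral_const_mul, hM1]
    rw [heq, ← hκdef]
    ring
  have hkey := key_pos (a:=a₀) (c:=c₀) ha
  have hexpr : E₀ * k - 9 * N₀ ^ 2 / (10 * a₀)
      = 9 * κ^2 / (10 * a₀) * (Mk a₀ c₀ 5 * Mk a₀ c₀ 1 - (Mk a₀ c₀ 3)^2) := by
    rw [hN', hE', hk']
    field_simp
    ring
  rw [hexpr]
  positivity
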